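/- If the multi-conclusion sequent Γ ⊢ Δ has a classical proof in cut-free classical sequent calculus, then the sequent |Γ|, ¬|Δ| ⊢ (with empty right-hand side) has a constructive proof in intuitionistic sequent calculus, where |Γ| is the multiset of light translations of formulas in Γ and ¬|Δ| is the multiset of negations of light translations of formulas in Δ. -/

import Mathlib

/-- Terms: de Bruijn variables and a binary function symbol (union). -/
inductive Tm : Type where
  | var : Nat → Tm
  | cup : Tm → Tm → Tm
deriving DecidableEq

def Tm.rename (f : Nat → Nat) : Tm → Tm
  | .var n => .var (f n)
  | .cup s t => .cup (s.rename f) (t.rename f)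

def Tm.subst (σ : Nat → Tm) : Tm → Tm
  | .var n => σ n
  | .cup s t => .cup (s.subst σ) (t.subst σ)

/-- First-order formulas over Nat-indexed predicate symbols, de Bruijn binders. -/
inductive Fm : Type where
  | atom : Nat → List Tm → Fm
  | top : Fm
  | bot : Fm
  | neg : Fm → Fm
  | and : Fm → Fm → Fm
  | or : Fm → Fm → Fm
  | imp : Fm → Fm → Fm
  | all : Fm → Fm
  | ex : Fm → Fm
deriving DecidableEq

def liftR (f : Nat → Nat) : Nat → Nat
  | 0 => 0
  | n + 1 => f n + 1

def liftS (σ : Nat → Tm) : Nat → Tm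
  | 0 => .var 0
  | n + 1 => (σ n).rename Nat.succ

def Fm.rename (f : Nat → Nat) : Fm → Fm
  | .atom p l => .atom p (l.map (Tm.rename f))
  | .top => .top
  | .bot => .bot
  | .neg A => .neg (A.rename f)
  | .and A B => .and (A.rename f) (B.rename f)
  | .or A B => .or (A.rename f) (B.rename f)
  | .imp A B => .imp (A.rename f) (B.rename f)
  | .all A => .all (A.rename (liftR f))
  | .ex A => .ex (A.rename (liftR f))

def Fm.subst (σ : Nat → Tm) : Fm → Fm
  | .atom p l => .atom p (l.map (Tm.subst σ))
  | .top => .top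
  | .bot => .bot
  | .neg A => .neg (A.subst σ)
  | .and A B => .and (A.subst σ) (B.subst σ)
  | .or A B => .or (A.subst σ) (B.subst σ)
  | .imp A B => .imp (A.subst σ) (B.subst σ)
  | .all A => .all (A.subst (liftS σ))
  | .ex A => .ex (A.subst (liftS σ))

/-- Shift all free variables up by one. -/
def Fm.shift (A : Fm) : Fm := A.rename Nat.succ

/-- Instantiate the outermost bound variable with term `t` : `(t/x)A`. -/
def Fm.inst (t : Tm) (A : Fm) : Fm :=
  A.subst (fun n => match n with | 0 => t | n + 1 => .var n)

/-- Double negation. -/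
def Fm.dn (A : Fm) : Fm := .neg (.neg A)

/-- Cut-free classical multi-conclusion sequent calculus (Figure 1). -/
inductive Cl : List Fm → List Fm → Prop where
  | ax (A : Fm) : Cl [A] [A]
  | perm {Γ Γ' Δ Δ'} : Γ.Perm Γ' → Δ.Perm Δ' → Cl Γ Δ → Cl Γ' Δ'
  | contrL {Γ Δ A} : Cl (A :: A :: Γ) Δ → Cl (A :: Γ) Δ
  | contrR {Γ Δ A} : Cl Γ (A :: A :: Δ) → Cl Γ (A :: Δ)
  | weakL {Γ Δ A} : Cl Γ Δ → Cl (A :: Γ) Δ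
  | weakR {Γ Δ A} : Cl Γ Δ → Cl Γ (A :: Δ)
  | topR {Γ Δ} : Cl Γ (.top :: Δ)
  | botL {Γ Δ} : Cl (.bot :: Γ) Δ
  | negL {Γ Δ A} : Cl Γ (A :: Δ) → Cl (.neg A :: Γ) Δ
  | negR {Γ Δ A} : Cl (A :: Γ) Δ → Cl Γ (.neg A :: Δ)
  | andL {Γ Δ A B} : Cl (A :: B :: Γ) Δ → Cl (.and A B :: Γ) Δ
  | andR {Γ Δ A B} : Cl Γ (A :: Δ) → Cl Γ (B :: Δ) → Cl Γ (.and A B :: Δ)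
  | orL {Γ Δ A B} : Cl (A :: Γ) Δ → Cl (B :: Γ) Δ → Cl (.or A B :: Γ) Δ
  | orR1 {Γ Δ A B} : Cl Γ (A :: Δ) → Cl Γ (.or A B :: Δ)
  | orR2 {Γ Δ A B} : Cl Γ (B :: Δ) → Cl Γ (.or A B :: Δ)
  | impL {Γ Δ A B} : Cl Γ (A :: Δ) → Cl (B :: Γ) Δ → Cl (.imp A B :: Γ) Δ
  | impR {Γ Δ A B} : Cl (A :: Γ) (B :: Δ) → Cl Γ (.imp A B :: Δ)
  | allL {Γ Δ A} (t : Tm) : Cl (A.inst t :: Γ) Δ → Cl (.all A :: Γ) Δ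
  | allR {Γ Δ A} : Cl (Γ.map Fm.shift) (A :: Δ.map Fm.shift) → Cl Γ (.all A :: Δ)
  | exL {Γ Δ A} : Cl (A :: Γ.map Fm.shift) (Δ.map Fm.shift) → Cl (.ex A :: Γ) Δ
  | exR {Γ Δ A} (t : Tm) : Cl Γ (A.inst t :: Δ) → Cl Γ (.ex A :: Δ)

/-- Constructive (intuitionistic) single-conclusion sequent calculus:
the restriction of the classical calculus to sequents with at most one
conclusion, with the adapted ⇒-left rule. -/
inductive Intu : List Fm → Option Fm → Prop where
  | ax (A : Fm) : Intu [A] (some A)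
  | perm {Γ Γ' Δ} : Γ.Perm Γ' → Intu Γ Δ → Intu Γ' Δ
  | contrL {Γ Δ A} : Intu (A :: A :: Γ) Δ → Intu (A :: Γ) Δ
  | weakL {Γ Δ A} : Intu Γ Δ → Intu (A :: Γ) Δ
  | weakR {Γ A} : Intu Γ none → Intu Γ (some A)
  | topR {Γ} : Intu Γ (some .top)
  | botL {Γ Δ} : Intu (.bot :: Γ) Δ
  | negL {Γ A} : Intu Γ (some A) → Intu (.neg A :: Γ) none
  | negR {Γ A} : Intu (A :: Γ) none → Intu Γ (some (.neg A))
  | andL {Γ Δ A B} : Intu (A :: B :: Γ) Δ → Intu (.and A B :: Γ) Δ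
  | andR {Γ A B} : Intu Γ (some A) → Intu Γ (some B) → Intu Γ (some (.and A B))
  | orL {Γ Δ A B} : Intu (A :: Γ) Δ → Intu (B :: Γ) Δ → Intu (.or A B :: Γ) Δ
  | orR1 {Γ A B} : Intu Γ (some A) → Intu Γ (some (.or A B))
  | orR2 {Γ A B} : Intu Γ (some B) → Intu Γ (some (.or A B))
  | impL {Γ Δ A B} : Intu Γ (some A) → Intu (B :: Γ) Δ → Intu (.imp A B :: Γ) Δ
  | impR {Γ A B} : Intu (A :: Γ) (some B) → Intu Γ (some (.imp A B))
  | allL {Γ Δ A} (t : Tm) : Intu (A.inst t :: Γ) Δ → Intu (.all A :: Γ) Δ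
  | allR {Γ A} : Intu (Γ.map Fm.shift) (some A) → Intu Γ (some (.all A))
  | exL {Γ Δ A} : Intu (A :: Γ.map Fm.shift) (Δ.map Fm.shift) → Intu (.ex A :: Γ) Δ
  | exR {Γ A} (t : Tm) : Intu Γ (some (A.inst t)) → Intu Γ (some (.ex A))

/-- Dowek's translation ‖·‖: double negations both before and after each
connective and quantifier, atoms unchanged. -/
def Fm.bar : Fm → Fm
  | .atom p l => .atom p l
  | .top => Fm.dn .top
  | .bot => Fm.dn .bot
  | .neg A => Fm.dn (Fm.dn (.neg A.bar))
  | .and A B => Fm.dn (.and (Fm.dn A.bar) (Fm.dn B.bar))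
  | .or A B => Fm.dn (.or (Fm.dn A.bar) (Fm.dn B.bar))
  | .imp A B => Fm.dn (.imp (Fm.dn A.bar) (Fm.dn B.bar))
  | .all A => Fm.dn (.all (Fm.dn A.bar))
  | .ex A => Fm.dn (.ex (Fm.dn A.bar))

/-- The light translation |·|: like ‖·‖ but the outermost double negation
is removed. -/
def Fm.light : Fm → Fm
  | .atom p l => .atom p l
  | .top => .top
  | .bot => .bot
  | .neg A => .neg (Fm.dn A.bar)
  | .and A B => .and (Fm.dn A.bar) (Fm.dn B.bar)
  | .or A B => .or (Fm.dn A.bar) (Fm.dn B.bar)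
  | .imp A B => .imp (Fm.dn A.bar) (Fm.dn B.bar)
  | .all A => .all (Fm.dn A.bar)
  | .ex A => .ex (Fm.dn A.bar)

/-- A formula is atomic if it is of the form `atom p l`. -/
def Fm.isAtom : Fm → Prop
  | .atom _ _ => True
  | _ => False


lemma Fm.bar_rename (A : Fm) : ∀ f, (A.rename f).bar = A.bar.rename f := by
  induction A <;> intro f <;> simp [Fm.rename, Fm.bar, Fm.dn, *]

lemma Fm.bar_subst (A : Fm) : ∀ σ, (A.subst σ).bar = A.bar.subst σ := by
  induction A <;> intro σ <;> simp [Fm.subst, Fm.bar, Fm.dn, *]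

lemma Fm.light_rename (A : Fm) (f : Nat → Nat) :
    (A.rename f).light = A.light.rename f := by
  cases A <;> simp [Fm.rename, Fm.light, Fm.dn, Fm.bar_rename]

lemma Fm.light_shift (A : Fm) : (Fm.shift A).light = Fm.shift A.light :=
  Fm.light_rename A Nat.succ

lemma Fm.bar_spec (A : Fm) : A.bar = A.light ∨ A.bar = Fm.dn A.light := by
  cases A <;> simp [Fm.bar, Fm.light, Fm.dn]

/-- From `X, Γ ⊢` deduce `¬¬X, Γ ⊢`. -/
lemma dnL {X : Fm} {Γ : List Fm} (h : Intu (X :: Γ) none) :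
    Intu (Fm.dn X :: Γ) none :=
  Intu.negL (Intu.negR h)

/-- From `¬X, Γ ⊢` deduce `Γ ⊢ ¬¬X`. -/
lemma dnR {X : Fm} {Γ : List Fm} (h : Intu (Fm.neg X :: Γ) none) :
    Intu Γ (some (Fm.dn X)) :=
  Intu.negR h

/-- From `¬X, Γ ⊢` deduce `¬¬¬X, Γ ⊢`. -/
lemma tripleNegL {X : Fm} {Γ : List Fm} (h : Intu (Fm.neg X :: Γ) none) :
    Intu (Fm.neg (Fm.dn X) :: Γ) none :=
  dnL (X := Fm.neg X) h

lemma negBarL {A : Fm} {Γ : List Fm} (h : Intu (Fm.neg A.light :: Γ) none) :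
    Intu (Fm.neg A.bar :: Γ) none := by
  rcases Fm.bar_spec A with e | e <;> rw [e]
  · exact h
  · exact tripleNegL h

lemma dnBarL {A : Fm} {Γ : List Fm} (h : Intu (A.light :: Γ) none) :
    Intu (Fm.dn A.bar :: Γ) none := by
  rcases Fm.bar_spec A with e | e <;> rw [e]
  · exact dnL h
  · exact dnL (dnL h)

lemma frontMid {X : Fm} {l1 l2 : List Fm} (h : Intu (X :: (l1 ++ l2)) none) :
    Intu (l1 ++ X :: l2) none :=
  Intu.perm List.perm_middle.symm h

lemma midFront {X : Fm} {l1 l2 : List Fm} (h : Intu (l1 ++ X :: l2) none) :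
    Intu (X :: (l1 ++ l2)) none :=
  Intu.perm List.perm_middle h

lemma map_shift_ctx (Γ Δ : List Fm) :
    List.map Fm.light (List.map Fm.shift Γ) ++
      List.map (fun B => Fm.neg B.light) (List.map Fm.shift Δ) =
    List.map Fm.shift
      (List.map Fm.light Γ ++ List.map (fun B => Fm.neg B.light) Δ) := by
  simp [List.map_map, Function.comp_def, Fm.light_rename, Fm.shift, Fm.rename]

theorem stmt2 (Γ Δ : List Fm) (h : Cl Γ Δ) :
    Intu (Γ.map Fm.light ++ Δ.map (fun B => Fm.neg B.light)) none := by
  induction h with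
  | ax A =>
      exact Intu.perm (List.Perm.swap _ _ _) (Intu.negL (Intu.ax A.light))
  | perm p q _ ih =>
      exact Intu.perm ((p.map _).append (q.map _)) ih
  | contrL _ ih => exact Intu.contrL ih
  | contrR _ ih =>
      refine frontMid (Intu.contrL ?_)
      exact Intu.perm (List.perm_middle.cons _) (midFront ih)
  | weakL _ ih => exact Intu.weakL ih
  | weakR _ ih => exact frontMid (Intu.weakL ih)
  | topR => exact frontMid (Intu.negL Intu.topR)
  | botL => exact Intu.botL
  | negL _ ih =>
      exact tripleNegL (negBarL (midFront ih))
  | negR _ ih =>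
      exact frontMid (dnL (dnBarL ih))
  | andL _ ih =>
      refine Intu.andL (dnBarL ?_)
      exact Intu.perm (List.Perm.swap _ _ _)
        (dnBarL (Intu.perm (List.Perm.swap _ _ _) ih))
  | andR _ _ ih1 ih2 =>
      exact frontMid (Intu.negL (Intu.andR (dnR (negBarL (midFront ih1)))
        (dnR (negBarL (midFront ih2)))))
  | orL _ _ ih1 ih2 =>
      exact Intu.orL (dnBarL ih1) (dnBarL ih2)
  | orR1 _ ih =>
      exact frontMid (Intu.negL (Intu.orR1 (dnR (negBarL (midFront ih)))))
  | orR2 _ ih =>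
      exact frontMid (Intu.negL (Intu.orR2 (dnR (negBarL (midFront ih)))))
  | impL _ _ ih1 ih2 =>
      exact Intu.impL (dnR (negBarL (midFront ih1))) (dnBarL ih2)
  | impR _ ih =>
      refine frontMid (Intu.negL (Intu.impR (dnR ?_)))
      have h1 := Intu.perm (List.Perm.swap _ _ _)
        (Intu.perm (List.perm_middle.cons _) ih)
      have h2 := Intu.perm (List.Perm.swap _ _ _) (negBarL h1)
      exact Intu.perm (List.Perm.swap _ _ _) (dnBarL h2)
  | allL t _ ih =>
      refine Intu.allL t ?_
      have h1 := dnBarL ih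
      simpa only [Fm.inst, Fm.dn, Fm.subst, Fm.bar_subst, List.append_eq] using h1
  | allR _ ih =>
      refine frontMid (Intu.negL (Intu.allR (dnR ?_)))
      have h1 := negBarL (midFront ih)
      simpa only [map_shift_ctx, List.append_eq] using h1
  | exL _ ih =>
      refine Intu.exL ?_
      have h1 := dnBarL ih
      simpa only [map_shift_ctx, List.append_eq, Option.map_none] using h1
  | exR t _ ih =>
      refine frontMid (Intu.negL (Intu.exR t (dnR ?_)))
      have h1 := negBarL (midFront ih)
      simpa only [Fm.inst, Fm.dn, Fm.subst, Fm.bar_subst, List.append_eq] using h1
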